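/- Suppose that either b(x)/x → +∞ as x → 0⁺, or b(x)/x → λ as x → 0⁺ for some λ ∈ (0, ∞) with λ·a > 1. Then there exists β > 0 satisfying the fixed point equation β·C(β) = 1 (i.e. the mean-field equations admit at least one non-trivial stationary distribution, whose density is (1/(C(β)(aβ − u)))·exp(−∫₀^u b(v)/(aβ − v) dv) on [0, aβ)). -/

import Mathlib

open MeasureTheory Real Filter Set intervalIntegral

noncomputable def Ffun (a : ℝ) (b : ℝ → ℝ) (β x : ℝ) : ℝ :=
  ∫ y in (0:ℝ)..x, b (a * β * y) / (1 - y)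

noncomputable def Cfun (a : ℝ) (b : ℝ → ℝ) (β : ℝ) : ℝ :=
  ∫ x in (0:ℝ)..1, (1 - x)⁻¹ * Real.exp (-∫ y in (0:ℝ)..x, b (a * β * y) / (1 - y))

noncomputable def Hfun (a : ℝ) (b : ℝ → ℝ) (β x : ℝ) : ℝ :=
  (1 - x)⁻¹ * Real.exp (-Ffun a b β x)

lemma Cfun_eq (a : ℝ) (b : ℝ → ℝ) (β : ℝ) :
    Cfun a b β = ∫ x in (0:ℝ)..1, Hfun a b β x := rfl

/-- integral of (1-y)⁻¹ -/
lemma integral_inv_one_sub {u x : ℝ} (hu : 0 ≤ u) (hux : u ≤ x) (hx : x < 1) :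
    (∫ y in u..x, (1 - y)⁻¹) = Real.log (1 - u) - Real.log (1 - x) := by
  have h1 : (∫ y in u..x, (1 - y)⁻¹) = ∫ y in (1 - x)..(1 - u), y⁻¹ := by
    simpa using intervalIntegral.integral_comp_sub_left (fun y => y⁻¹) 1 (a := u) (b := x)
  have h0 : (0:ℝ) ∉ uIcc (1 - x) (1 - u) := by
    intro h
    rcases Set.mem_uIcc.mp h with ⟨ha1, _⟩ | ⟨_, ha2⟩ <;> linarith
  rw [h1, integral_inv h0, Real.log_div (by linarith) (by linarith)]

/-- integrability of (1-x)^(c-1) on 0..1 -/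
lemma intervalIntegrable_one_sub_rpow {c : ℝ} (hc : 0 < c) :
    IntervalIntegrable (fun x : ℝ => (1 - x) ^ (c - 1)) volume 0 1 := by
  have h := (intervalIntegral.intervalIntegrable_rpow' (a := 0) (b := 1) (r := c - 1)
    (by linarith)).comp_sub_left 1
  have h2 := h.symm
  simpa using h2

lemma integral_one_sub_rpow {c : ℝ} (hc : 0 < c) :
    (∫ x in (0:ℝ)..1, (1 - x) ^ (c - 1)) = 1 / c := by
  have h1 : (∫ x in (0:ℝ)..1, (1 - x) ^ (c - 1)) = ∫ x in (0:ℝ)..1, x ^ (c - 1) := by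
    simpa using intervalIntegral.integral_comp_sub_left (fun y : ℝ => y ^ (c - 1)) 1
      (a := (0:ℝ)) (b := 1)
  rw [h1, integral_rpow (Or.inl (by linarith))]
  rw [sub_add_cancel, Real.one_rpow, Real.zero_rpow hc.ne']
  ring

section Main
variable {a : ℝ} {b : ℝ → ℝ}

lemma bnn (hb_mono : MonotoneOn b (Ici 0)) (hb0 : 0 ≤ b 0) {z : ℝ} (hz : 0 ≤ z) : 0 ≤ b z :=
  hb0.trans (hb_mono (mem_Ici.2 le_rfl) (mem_Ici.2 hz) hz)

lemma phi_integrable (hb_cont : Continuous b) (β : ℝ) {u x : ℝ} (hux : u ≤ x) (hx : x < 1) :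
    IntervalIntegrable (fun y => b (a * β * y) / (1 - y)) volume u x := by
  apply ContinuousOn.intervalIntegrable
  apply ContinuousOn.div
  · exact (hb_cont.comp (continuous_const.mul continuous_id')).continuousOn
  · exact (continuous_const.sub continuous_id').continuousOn
  · intro y hy
    rw [uIcc_of_le hux] at hy
    have : y ≤ x := hy.2
    intro h; linarith [sub_eq_zero.mp h]

lemma F_nonneg (hb_mono : MonotoneOn b (Ici 0)) (hb0 : 0 ≤ b 0) (ha : 0 ≤ a) {β x : ℝ}
    (hβ : 0 ≤ β) (hx0 : 0 ≤ x) (hx1 : x ≤ 1) : 0 ≤ Ffun a b β x := by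
  apply intervalIntegral.integral_nonneg hx0
  intro u hu
  exact div_nonneg (bnn hb_mono hb0 (mul_nonneg (mul_nonneg ha hβ) hu.1)) (by linarith [hu.2])

lemma F_le (hb_cont : Continuous b) (hb_mono : MonotoneOn b (Ici 0)) (hb0 : 0 ≤ b 0)
    {β K x : ℝ} (hx0 : 0 ≤ x) (hx1 : x < 1)
    (hK : ∀ y ∈ Icc 0 x, b (a * β * y) ≤ K) :
    Ffun a b β x ≤ K * (-Real.log (1 - x)) := by
  have hK0 : 0 ≤ K := by
    have h0 := hK 0 ⟨le_refl 0, hx0⟩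
    have : 0 ≤ b (a * β * 0) := by
      rw [mul_zero]; exact hb0
    linarith
  have h1 : Ffun a b β x ≤ ∫ y in (0:ℝ)..x, K * (1 - y)⁻¹ := by
    apply intervalIntegral.integral_mono_on hx0 (phi_integrable hb_cont β hx0 hx1)
      (((continuous_const.sub continuous_id').continuousOn.inv₀ (by
        intro y hy; rw [uIcc_of_le hx0] at hy
        intro h; linarith [sub_eq_zero.mp h, hy.2])).const_smul K).intervalIntegrable
    intro y hy
    rw [div_eq_mul_inv]
    have h1y : 0 < 1 - y := by linarith [hy.2]
    exact mul_le_mul_of_nonneg_right (hK y hy) (by positivity)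
  rw [intervalIntegral.integral_const_mul, integral_inv_one_sub (le_refl 0) hx0 hx1] at h1
  simpa using h1

lemma F_ge_mu (hb_cont : Continuous b) (hb0 : 0 ≤ b 0) (ha : 0 < a)
    {β mu z₀ x : ℝ} (hβ : 0 < β) (hmu : 0 ≤ mu)
    (hbz : ∀ z, 0 < z → z ≤ z₀ → mu * z ≤ b z) (haβ : a * β ≤ z₀)
    (hx0 : 0 ≤ x) (hx1 : x < 1) :
    mu * a * β * (-Real.log (1 - x)) - mu * a * β ≤ Ffun a b β x := by
  set m := mu * a * β with hm
  have hm0 : 0 ≤ m := by positivity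
  have hint : IntervalIntegrable (fun y : ℝ => m * ((1 - y)⁻¹ - 1)) volume 0 x := by
    apply ContinuousOn.intervalIntegrable
    apply ContinuousOn.const_smul _ m
    apply ContinuousOn.sub _ continuousOn_const
    apply ContinuousOn.inv₀ (continuous_const.sub continuous_id').continuousOn
    intro y hy
    rw [uIcc_of_le hx0] at hy
    intro h; linarith [sub_eq_zero.mp h, hy.2]
  have h1 : (∫ y in (0:ℝ)..x, m * ((1 - y)⁻¹ - 1)) ≤ Ffun a b β x := by
    apply intervalIntegral.integral_mono_on hx0 hint (phi_integrable hb_cont β hx0 hx1)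
    intro y hy
    have hy1 : 0 < 1 - y := by linarith [hy.2]
    rcases eq_or_lt_of_le hy.1 with h0 | h0
    · rw [← h0]
      simp [hb0]
    · have hz : 0 < a * β * y := by positivity
      have hz2 : a * β * y ≤ z₀ := by nlinarith [hy.2]
      have := hbz _ hz hz2
      rw [div_eq_mul_inv]
      have hid : m * ((1 - y)⁻¹ - 1) = (mu * (a * β * y)) * (1 - y)⁻¹ := by
        field_simp
        ring
      rw [hid]
      exact mul_le_mul_of_nonneg_right this (by positivity)
  refine le_trans ?_ h1
  have h2 : (∫ y in (0:ℝ)..x, m * ((1 - y)⁻¹ - 1))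
      = m * ((-Real.log (1 - x)) - x) := by
    rw [intervalIntegral.integral_const_mul]
    have : (∫ y in (0:ℝ)..x, ((1 - y)⁻¹ - 1))
        = (∫ y in (0:ℝ)..x, (1 - y)⁻¹) - ∫ y in (0:ℝ)..x, (1:ℝ) := by
      apply intervalIntegral.integral_sub _ intervalIntegrable_const
      apply ContinuousOn.intervalIntegrable
      apply ContinuousOn.inv₀ (continuous_const.sub continuous_id').continuousOn
      intro y hy
      rw [uIcc_of_le hx0] at hy
      intro h; linarith [sub_eq_zero.mp h, hy.2]
    rw [this, integral_inv_one_sub (le_refl 0) hx0 hx1]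
    simp
  rw [h2, hm]
  nlinarith [Real.log_nonpos (by linarith) (by linarith : 1 - x ≤ 1)]

lemma F_split_ge (hb_cont : Continuous b) (hb_mono : MonotoneOn b (Ici 0)) (hb0 : 0 ≤ b 0)
    (ha : 0 ≤ a) {β c x : ℝ} (hβ : 0 ≤ β) (hc : 0 ≤ c)
    (hx : x ∈ Ico (1/2 : ℝ) 1) (hcb : ∀ y ∈ Icc (1/2 : ℝ) x, c ≤ b (a * β * y)) :
    c * (-Real.log (1 - x)) - c * Real.log 2 ≤ Ffun a b β x := by
  have hx2 : (1/2 : ℝ) ≤ x := hx.1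
  have hx1 : x < 1 := hx.2
  have hsplit : Ffun a b β x
      = (∫ y in (0:ℝ)..(1/2 : ℝ), b (a * β * y) / (1 - y))
        + ∫ y in (1/2 : ℝ)..x, b (a * β * y) / (1 - y) := by
    rw [Ffun]
    exact (intervalIntegral.integral_add_adjacent_intervals
      (phi_integrable hb_cont β (by norm_num) (by norm_num))
      (phi_integrable hb_cont β hx2 hx1)).symm
  have h1 : (0:ℝ) ≤ ∫ y in (0:ℝ)..(1/2 : ℝ), b (a * β * y) / (1 - y) := by
    apply intervalIntegral.integral_nonneg (by norm_num)
    intro u hu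
    exact div_nonneg (bnn hb_mono hb0 (mul_nonneg (mul_nonneg ha hβ) hu.1)) (by linarith [hu.2])
  have h2 : c * (-Real.log (1 - x)) - c * Real.log 2
      ≤ ∫ y in (1/2 : ℝ)..x, b (a * β * y) / (1 - y) := by
    have hlow : (∫ y in (1/2 : ℝ)..x, c * (1 - y)⁻¹)
        ≤ ∫ y in (1/2 : ℝ)..x, b (a * β * y) / (1 - y) := by
      apply intervalIntegral.integral_mono_on hx2 _ (phi_integrable hb_cont β hx2 hx1)
      · intro y hy
        have hy1 : 0 < 1 - y := by linarith [hy.2]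
        rw [div_eq_mul_inv]
        exact mul_le_mul_of_nonneg_right (hcb y hy) (by positivity)
      · apply ContinuousOn.intervalIntegrable
        apply ContinuousOn.const_smul _ c
        apply ContinuousOn.inv₀ (continuous_const.sub continuous_id').continuousOn
        intro y hy
        rw [uIcc_of_le hx2] at hy
        intro h; linarith [sub_eq_zero.mp h, hy.2]
    refine le_trans (le_of_eq ?_) hlow
    rw [intervalIntegral.integral_const_mul,
      integral_inv_one_sub (by norm_num) hx2 hx1]
    rw [show (1 : ℝ) - 1/2 = 1/2 by norm_num, show Real.log (1/2 : ℝ) = -Real.log 2 by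
      rw [one_div, Real.log_inv]]
    ring
  linarith

lemma H_nonneg (β : ℝ) {x : ℝ} (hx : x ≤ 1) : 0 ≤ Hfun a b β x :=
  mul_nonneg (inv_nonneg.mpr (by linarith)) (Real.exp_pos _).le

lemma H_le_two_add (hb_cont : Continuous b) (hb_mono : MonotoneOn b (Ici 0)) (hb0 : 0 ≤ b 0)
    (ha : 0 ≤ a) {β c : ℝ} (hβ : 0 ≤ β) (hc : 0 ≤ c)
    (hcb : ∀ y ∈ Ico (1/2 : ℝ) 1, c ≤ b (a * β * y)) :
    ∀ x ∈ Ioc (0:ℝ) 1, Hfun a b β x ≤ 2 + 2 ^ c * (1 - x) ^ (c - 1) := by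
  intro x hx
  have hterm : (0:ℝ) ≤ 2 ^ c * (1 - x) ^ (c - 1) :=
    mul_nonneg (Real.rpow_nonneg (by norm_num) _) (Real.rpow_nonneg (by linarith [hx.2]) _)
  rcases eq_or_lt_of_le hx.2 with h1 | h1
  · rw [Hfun, h1]
    simp only [sub_self, inv_zero, zero_mul]
    have h0 : (0:ℝ) ≤ 2 ^ c * (0:ℝ) ^ (c - 1) :=
      mul_nonneg (Real.rpow_nonneg (by norm_num) _) (Real.rpow_nonneg le_rfl _)
    linarith
  rcases le_or_gt x (1/2) with h2 | h2
  · have hF : 0 ≤ Ffun a b β x := F_nonneg hb_mono hb0 ha hβ hx.1.le hx.2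
    have : Hfun a b β x ≤ 2 * 1 := by
      apply mul_le_mul _ _ (Real.exp_pos _).le (by norm_num)
      · rw [show (2:ℝ) = ((1:ℝ)/2)⁻¹ by norm_num]
        exact inv_anti₀ (by norm_num) (by linarith)
      · exact Real.exp_le_one_iff.mpr (by linarith)
    linarith
  · have hF := F_split_ge hb_cont hb_mono hb0 ha hβ hc ⟨h2.le, h1⟩
      (fun y hy => hcb y ⟨hy.1, lt_of_le_of_lt hy.2 h1⟩)
    have h1x : 0 < 1 - x := by linarith
    have hexp : Real.exp (-Ffun a b β x) ≤ (1 - x) ^ c * 2 ^ c := by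
      rw [Real.rpow_def_of_pos h1x, Real.rpow_def_of_pos (by norm_num : (0:ℝ) < 2),
        ← Real.exp_add]
      apply Real.exp_le_exp.mpr
      nlinarith [hF]
    have : Hfun a b β x ≤ (1 - x)⁻¹ * ((1 - x) ^ c * 2 ^ c) :=
      mul_le_mul_of_nonneg_left hexp (by positivity)
    have hre : (1 - x)⁻¹ * ((1 - x) ^ c * 2 ^ c) = 2 ^ c * (1 - x) ^ (c - 1) := by
      rw [Real.rpow_sub_one h1x.ne']
      field_simp
    rw [hre] at this
    linarith

lemma F_contOn (hb_cont : Continuous b) (β : ℝ) : ContinuousOn (Ffun a b β) (Ico 0 1) := by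
  intro t ht
  set u := (1 + t)/2 with hu
  have htu : t < u := by rw [hu]; linarith [ht.2]
  have hu1 : u < 1 := by rw [hu]; linarith [ht.2]
  have hu0 : (0:ℝ) ≤ u := by rw [hu]; linarith [ht.1]
  have hint : IntegrableOn (fun y => b (a * β * y) / (1 - y)) (uIcc 0 u) volume := by
    rw [uIcc_of_le hu0, integrableOn_Icc_iff_integrableOn_Ioc]
    exact ((intervalIntegrable_iff_integrableOn_Ioc_of_le hu0).mp
      (phi_integrable hb_cont β hu0 hu1))
  have hcont := intervalIntegral.continuousOn_primitive_interval (a := 0) (b := u) hint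
  rw [uIcc_of_le hu0] at hcont
  have hw : ContinuousWithinAt (Ffun a b β) (Icc 0 u) t := hcont t ⟨ht.1, htu.le⟩
  apply hw.mono_of_mem_nhdsWithin
  refine mem_of_superset (inter_mem_nhdsWithin _ (Iio_mem_nhds htu)) ?_
  rintro y ⟨hy1, hy2⟩
  exact ⟨hy1.1, le_of_lt hy2⟩

lemma H_contOn (hb_cont : Continuous b) (β : ℝ) :
    ContinuousOn (fun x => Hfun a b β x) (Ioo 0 1) := by
  apply ContinuousOn.mul
  · apply ContinuousOn.inv₀ (continuous_const.sub continuous_id').continuousOn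
    intro y hy
    intro h; linarith [sub_eq_zero.mp h, hy.2]
  · exact (((F_contOn hb_cont β).mono (Ioo_subset_Ico_self)).neg).rexp

lemma H_aesm (hb_cont : Continuous b) (β : ℝ) :
    AEStronglyMeasurable (fun x => Hfun a b β x) (volume.restrict (Ioc (0:ℝ) 1)) := by
  rw [← Measure.restrict_congr_set Ioo_ae_eq_Ioc]
  exact (H_contOn hb_cont β).aestronglyMeasurable measurableSet_Ioo

lemma H_intble (hb_cont : Continuous b) (hb_mono : MonotoneOn b (Ici 0)) (hb0 : 0 ≤ b 0)
    (ha : 0 < a) (hb_pos : ∀ x > (0:ℝ), 0 < b x) {β : ℝ} (hβ : 0 < β) :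
    IntervalIntegrable (fun x => Hfun a b β x) volume 0 1 := by
  set c := b (a * β / 2) with hcdef
  have hc : 0 < c := hb_pos _ (by positivity)
  rw [intervalIntegrable_iff_integrableOn_Ioc_of_le (by norm_num)]
  apply Integrable.mono' (g := fun x => 2 + 2 ^ c * (1 - x) ^ (c - 1))
  · exact (intervalIntegrable_const.add
      ((intervalIntegrable_one_sub_rpow hc).const_mul _)).1
  · exact H_aesm hb_cont β
  · filter_upwards [ae_restrict_mem measurableSet_Ioc] with x hx
    rw [Real.norm_eq_abs, abs_of_nonneg (H_nonneg β hx.2)]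
    apply H_le_two_add hb_cont hb_mono hb0 ha.le hβ.le hc.le _ x hx
    intro y hy
    apply hb_mono (mem_Ici.2 (by positivity))
      (mem_Ici.2 (mul_nonneg (mul_nonneg ha.le hβ.le) (by linarith [hy.1])))
    nlinarith [hy.1, mul_pos ha hβ]

lemma Cfun_le_small (hb_cont : Continuous b) (hb_mono : MonotoneOn b (Ici 0)) (hb0 : 0 ≤ b 0)
    (ha : 0 < a) (hb_pos : ∀ x > (0:ℝ), 0 < b x)
    {β mu z₀ : ℝ} (hβ : 0 < β) (hmu : 0 < mu)
    (hbz : ∀ z, 0 < z → z ≤ z₀ → mu * z ≤ b z) (haβ : a * β ≤ z₀) :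
    β * Cfun a b β ≤ Real.exp (mu * a * β) / (mu * a) := by
  set m := mu * a * β with hm
  have hm0 : 0 < m := by positivity
  have hpt : ∀ x ∈ Icc (0:ℝ) 1, Hfun a b β x ≤ Real.exp m * (1 - x) ^ (m - 1) := by
    intro x hx
    rcases eq_or_lt_of_le hx.2 with h1 | h1
    · rw [Hfun, ← h1]
      simp only [sub_self, inv_zero, zero_mul]
      positivity
    · have hF := F_ge_mu hb_cont hb0 ha hβ hmu.le hbz haβ hx.1 h1
      rw [← hm] at hF
      have hFr : -(m * Real.log (1 - x)) - m ≤ Ffun a b β x := by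
        refine le_trans (le_of_eq ?_) hF; ring
      have h1x : 0 < 1 - x := by linarith
      have hexp : Real.exp (-Ffun a b β x) ≤ Real.exp m * (1 - x) ^ m := by
        rw [← Real.exp_log (Real.rpow_pos_of_pos h1x m), ← Real.exp_add,
          Real.log_rpow h1x]
        apply Real.exp_le_exp.mpr
        linarith [hFr]
      have h2 : Hfun a b β x ≤ (1 - x)⁻¹ * (Real.exp m * (1 - x) ^ m) :=
        mul_le_mul_of_nonneg_left hexp (by positivity)
      refine h2.trans (le_of_eq ?_)
      rw [Real.rpow_sub_one h1x.ne']
      field_simp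
  have hCle : Cfun a b β ≤ Real.exp m * (1 / m) := by
    rw [Cfun_eq]
    have h3 : (∫ x in (0:ℝ)..1, Hfun a b β x)
        ≤ ∫ x in (0:ℝ)..1, Real.exp m * (1 - x) ^ (m - 1) := by
      apply intervalIntegral.integral_mono_on (by norm_num)
        (H_intble hb_cont hb_mono hb0 ha hb_pos hβ)
        ((intervalIntegrable_one_sub_rpow hm0).const_mul _) hpt
    rwa [intervalIntegral.integral_const_mul, integral_one_sub_rpow hm0] at h3
  calc β * Cfun a b β ≤ β * (Real.exp m * (1 / m)) :=
        mul_le_mul_of_nonneg_left hCle hβ.le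
    _ = Real.exp (mu * a * β) / (mu * a) := by
        rw [hm]; field_simp

lemma Cfun_ge_big (hb_cont : Continuous b) (hb_mono : MonotoneOn b (Ici 0)) (hb0 : 0 ≤ b 0)
    (ha : 0 < a) (hb_pos : ∀ x > (0:ℝ), 0 < b x)
    {β ε : ℝ} (hε0 : 0 < ε) (hε1 : ε < 1) (hβ : 0 < β) (hβ3 : 3 / β ≤ ε) :
    3 * (1 - ε) ^ (b (3 * a)) ≤ β * Cfun a b β := by
  set K := b (3 * a) with hK
  have hK0 : 0 ≤ K := bnn hb_mono hb0 (by positivity)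
  set t := 3 / β with ht
  have ht0 : 0 < t := by positivity
  have ht1 : t < 1 := lt_of_le_of_lt hβ3 hε1
  have htε : t ≤ ε := hβ3
  have hIntOn : IntegrableOn (fun x => Hfun a b β x) (Ioc (0:ℝ) 1) volume :=
    ((intervalIntegrable_iff_integrableOn_Ioc_of_le (by norm_num)).mp
      (H_intble hb_cont hb_mono hb0 ha hb_pos hβ))
  have hstep1 : (∫ x in Ioc (0:ℝ) t, Hfun a b β x) ≤ ∫ x in Ioc (0:ℝ) 1, Hfun a b β x := by
    apply setIntegral_mono_set hIntOn
    · filter_upwards [ae_restrict_mem measurableSet_Ioc] with x hx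
      exact H_nonneg β hx.2
    · exact HasSubset.Subset.eventuallyLE (Ioc_subset_Ioc_right ht1.le)
  have hstep2 : (1 - t) ^ K * t ≤ ∫ x in Ioc (0:ℝ) t, Hfun a b β x := by
    have h := setIntegral_ge_of_const_le (μ := volume) (c := (1 - t) ^ K)
      measurableSet_Ioc (by simp [Real.volume_Ioc]) ?_ (hIntOn.mono_set (Ioc_subset_Ioc_right ht1.le))
    · rw [Real.volume_real_Ioc_of_le ht0.le, sub_zero, smul_eq_mul, mul_comm] at h
      exact h
    · intro x hx
      have hx1 : x < 1 := lt_of_le_of_lt hx.2 ht1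
      have h1x : 0 < 1 - x := by linarith
      have hFle : Ffun a b β x ≤ K * (-Real.log (1 - x)) := by
        apply F_le hb_cont hb_mono hb0 hx.1.le hx1
        intro y hy
        apply hb_mono (mem_Ici.2 (mul_nonneg (mul_nonneg ha.le hβ.le) hy.1))
          (mem_Ici.2 (by positivity))
        have hyx : y ≤ t := le_trans hy.2 hx.2
        calc a * β * y ≤ a * β * t := by
              apply mul_le_mul_of_nonneg_left hyx (by positivity)
          _ = 3 * a := by rw [ht]; field_simp
      have hexp : (1 - x) ^ K ≤ Real.exp (-Ffun a b β x) := by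
        rw [← Real.exp_log (Real.rpow_pos_of_pos h1x K), Real.log_rpow h1x]
        apply Real.exp_le_exp.mpr
        nlinarith
      calc (1 - t) ^ K ≤ (1 - x) ^ K :=
            Real.rpow_le_rpow (by linarith) (by linarith [hx.2]) hK0
        _ ≤ Real.exp (-Ffun a b β x) := hexp
        _ ≤ Hfun a b β x := by
            rw [Hfun]
            nth_rewrite 1 [← one_mul (Real.exp (-Ffun a b β x))]
            apply mul_le_mul_of_nonneg_right _ (Real.exp_pos _).le
            have h := inv_anti₀ h1x (by linarith [hx.1] : 1 - x ≤ 1)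
            simpa using h
  have hC : (1 - t) ^ K * t ≤ Cfun a b β := by
    rw [Cfun_eq, intervalIntegral.integral_of_le (by norm_num : (0:ℝ) ≤ 1)]
    exact le_trans hstep2 hstep1
  calc 3 * (1 - ε) ^ K ≤ 3 * (1 - t) ^ K := by
        apply mul_le_mul_of_nonneg_left (Real.rpow_le_rpow (by linarith) (by linarith) hK0)
        norm_num
    _ = β * ((1 - t) ^ K * t) := by rw [ht]; field_simp
    _ ≤ β * Cfun a b β := mul_le_mul_of_nonneg_left hC hβ.le

lemma F_contParam (hb_cont : Continuous b) (hb_mono : MonotoneOn b (Ici 0)) (hb0 : 0 ≤ b 0)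
    (ha : 0 < a) {β₀ t : ℝ} (hβ₀ : 0 < β₀) (ht0 : 0 ≤ t) (ht1 : t < 1) :
    ContinuousAt (fun β => Ffun a b β t) β₀ := by
  have h1t : 0 < 1 - t := by linarith
  have hmeas : ∀ β : ℝ, AEStronglyMeasurable (fun y => b (a * β * y) / (1 - y))
      ((volume : Measure ℝ).restrict (uIoc (0:ℝ) t)) := by
    intro β
    have h1 : Measurable fun y : ℝ => b (a * β * y) :=
      (hb_cont.comp (continuous_const.mul continuous_id')).measurable
    have h2 : Measurable fun y : ℝ => (1 - y)⁻¹ :=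
      (measurable_const.sub measurable_id').inv
    have h3 : Measurable fun y : ℝ => b (a * β * y) / (1 - y) := by
      have h4 : Measurable fun y : ℝ => b (a * β * y) * (1 - y)⁻¹ := h1.mul h2
      simpa [div_eq_mul_inv] using h4
    exact h3.aestronglyMeasurable.restrict
  apply intervalIntegral.continuousAt_of_dominated_interval
    (bound := fun _ => b (a * (β₀ + 1)) * (1 - t)⁻¹)
  · exact Eventually.of_forall hmeas
  · filter_upwards [Ioo_mem_nhds hβ₀ (lt_add_one β₀)] with β hβ
    apply ae_of_all
    intro y hy
    rw [uIoc_of_le ht0] at hy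
    have hy1 : 0 < 1 - y := by linarith [hy.2]
    have hbnn : 0 ≤ b (a * β * y) :=
      bnn hb_mono hb0 (mul_nonneg (mul_nonneg ha.le hβ.1.le) hy.1.le)
    rw [Real.norm_eq_abs, abs_of_nonneg (div_nonneg hbnn hy1.le), div_eq_mul_inv]
    apply mul_le_mul
    · apply hb_mono (mem_Ici.2 (mul_nonneg (mul_nonneg ha.le hβ.1.le) hy.1.le))
        (mem_Ici.2 (by positivity))
      have hA : a * β * y ≤ a * β * 1 :=
        mul_le_mul_of_nonneg_left (by linarith [hy.2]) (mul_nonneg ha.le hβ.1.le)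
      have hB : a * β ≤ a * (β₀ + 1) := mul_le_mul_of_nonneg_left hβ.2.le ha.le
      nlinarith
    · exact inv_anti₀ h1t (by linarith [hy.2])
    · positivity
    · exact bnn hb_mono hb0 (by positivity)
  · exact intervalIntegrable_const
  · apply ae_of_all
    intro y hy
    rw [uIoc_of_le ht0] at hy
    have hy1 : (1:ℝ) - y ≠ 0 := by intro h; nlinarith [hy.2, sub_eq_zero.mp h]
    exact ((hb_cont.comp (((continuous_const.mul continuous_id').mul
      continuous_const))).div_const _).continuousAt

lemma H_contParam (hb_cont : Continuous b) (hb_mono : MonotoneOn b (Ici 0)) (hb0 : 0 ≤ b 0)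
    (ha : 0 < a) {β₀ t : ℝ} (hβ₀ : 0 < β₀) (ht0 : 0 ≤ t) (ht1 : t < 1) :
    ContinuousAt (fun β => Hfun a b β t) β₀ := by
  apply ContinuousAt.mul continuousAt_const
  exact Real.continuous_exp.continuousAt.comp
    (F_contParam hb_cont hb_mono hb0 ha hβ₀ ht0 ht1).neg

lemma Cfun_contAt (hb_cont : Continuous b) (hb_mono : MonotoneOn b (Ici 0)) (hb0 : 0 ≤ b 0)
    (ha : 0 < a) (hb_pos : ∀ x > (0:ℝ), 0 < b x) {β₀ : ℝ} (hβ₀ : 0 < β₀) :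
    ContinuousAt (fun β => Cfun a b β) β₀ := by
  have hc : 0 < b (a * β₀ / 4) := hb_pos _ (by positivity)
  simp only [Cfun_eq]
  apply intervalIntegral.continuousAt_of_dominated_interval
    (bound := fun x => 2 + 2 ^ (b (a * β₀ / 4)) * (1 - x) ^ ((b (a * β₀ / 4)) - 1))
  · apply Eventually.of_forall
    intro β
    have := H_aesm (a := a) hb_cont β
    rwa [← uIoc_of_le (by norm_num : (0:ℝ) ≤ 1)] at this
  · filter_upwards [Ici_mem_nhds (half_lt_self hβ₀)] with β hβ
    apply ae_of_all
    intro x hx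
    rw [uIoc_of_le (by norm_num : (0:ℝ) ≤ 1)] at hx
    have hβpos : 0 < β := lt_of_lt_of_le (half_pos hβ₀) hβ
    rw [Real.norm_eq_abs, abs_of_nonneg (H_nonneg β hx.2)]
    apply H_le_two_add hb_cont hb_mono hb0 ha.le hβpos.le hc.le _ x hx
    intro y hy
    apply hb_mono (mem_Ici.2 (by positivity))
      (mem_Ici.2 (mul_nonneg (mul_nonneg ha.le hβpos.le) (by linarith [hy.1])))
    have hA : a * β * (1/2) ≤ a * β * y :=
      mul_le_mul_of_nonneg_left hy.1 (by positivity)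
    have hB : a * (β₀/2) ≤ a * β := mul_le_mul_of_nonneg_left hβ ha.le
    nlinarith
  · exact intervalIntegrable_const.add ((intervalIntegrable_one_sub_rpow hc).const_mul _)
  · have hae : ∀ᵐ x : ℝ ∂volume, x ≠ 1 := by
      have : (volume : Measure ℝ) {(1:ℝ)} = 0 := Real.volume_singleton
      exact measure_eq_zero_iff_ae_notMem.mp this
    filter_upwards [hae] with x hx1 hxI
    rw [uIoc_of_le (by norm_num : (0:ℝ) ≤ 1)] at hxI
    exact H_contParam hb_cont hb_mono hb0 ha hβ₀ hxI.1.le (lt_of_le_of_ne hxI.2 hx1)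

lemma get_mu (ha : 0 < a)
    (hslope : Tendsto (fun x => b x / x) (nhdsWithin 0 (Set.Ioi 0)) atTop ∨
      ∃ lam : ℝ, 0 < lam ∧ 1 < lam * a ∧
        Tendsto (fun x => b x / x) (nhdsWithin 0 (Set.Ioi 0)) (nhds lam)) :
    ∃ mu z₀ : ℝ, 0 < mu ∧ 1 < mu * a ∧ 0 < z₀ ∧ ∀ z, 0 < z → z ≤ z₀ → mu * z ≤ b z := by
  rcases hslope with h | ⟨lam, hlam, hla, h⟩
  · have h2 : ∀ᶠ x in nhdsWithin 0 (Set.Ioi 0), 2 / a ≤ b x / x :=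
      h.eventually_ge_atTop (2 / a)
    rw [eventually_iff, mem_nhdsGT_iff_exists_Ioc_subset] at h2
    obtain ⟨u, hu, hsub⟩ := h2
    refine ⟨2 / a, u, by positivity, by field_simp; norm_num, hu, ?_⟩
    intro z hz hzu
    have := hsub ⟨hz, hzu⟩
    rw [mem_setOf_eq] at this
    exact (le_div_iff₀ hz).mp this
  · have h1a : 1 / a < lam := by rw [div_lt_iff₀ ha]; linarith [mul_comm lam a]
    set mu := (lam + 1 / a) / 2 with hmu
    have hmupos : 0 < mu := by positivity
    have hmult : mu < lam := by rw [hmu]; linarith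
    have hmua : 1 < mu * a := by
      have he : mu * a = (lam * a + 1) / 2 := by
        rw [hmu]; field_simp
      rw [he]; linarith
    have h2 : ∀ᶠ x in nhdsWithin 0 (Set.Ioi 0), mu < b x / x :=
      h.eventually (eventually_gt_nhds hmult)
    rw [eventually_iff, mem_nhdsGT_iff_exists_Ioc_subset] at h2
    obtain ⟨u, hu, hsub⟩ := h2
    refine ⟨mu, u, hmupos, hmua, hu, ?_⟩
    intro z hz hzu
    have := hsub ⟨hz, hzu⟩
    rw [mem_setOf_eq] at this
    exact ((le_div_iff₀ hz).mp this.le)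

end Main

/-- if `b(x)/x → ∞` as `x → 0⁺`, or `b(x)/x → λ` as `x → 0⁺` with
`λ ∈ (0,∞)` and `λ a > 1`, then the fixed point equation `β C(β) = 1` has a
solution `β > 0`, i.e. there is at least one non-trivial stationary distribution. -/
theorem exists_nontrivial_stationary_distribution
    (a : ℝ) (ha : 0 < a) (b : ℝ → ℝ)
    (hb_cont : Continuous b) (hb_mono : MonotoneOn b (Set.Ici 0))
    (hb0 : 0 ≤ b 0) (hb_pos : ∀ x > (0:ℝ), 0 < b x)
    (hslope : Tendsto (fun x => b x / x) (nhdsWithin 0 (Set.Ioi 0)) atTop ∨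
      ∃ lam : ℝ, 0 < lam ∧ 1 < lam * a ∧
        Tendsto (fun x => b x / x) (nhdsWithin 0 (Set.Ioi 0)) (nhds lam)) :
    ∃ β : ℝ, 0 < β ∧ β * Cfun a b β = 1 := by
  obtain ⟨mu, z₀, hmu, hmua, hz₀, hbz⟩ := get_mu ha hslope
  have hmua0 : 0 < mu * a := by positivity
  have hlog : 0 < Real.log (mu * a) := Real.log_pos hmua
  set β₁ : ℝ := min (z₀ / a) (Real.log (mu * a) / (2 * (mu * a))) with hβ₁def
  have hβ₁ : 0 < β₁ := lt_min (by positivity) (by positivity)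
  have haβ₁ : a * β₁ ≤ z₀ := by
    have h1 : β₁ ≤ z₀ / a := min_le_left _ _
    rw [mul_comm, ← le_div_iff₀ ha]
    exact h1
  have hsmall : β₁ * Cfun a b β₁ < 1 := by
    have h1 := Cfun_le_small hb_cont hb_mono hb0 ha hb_pos hβ₁ hmu hbz haβ₁
    have h2 : mu * a * β₁ ≤ Real.log (mu * a) / 2 := by
      have h3 : β₁ ≤ Real.log (mu * a) / (2 * (mu * a)) := min_le_right _ _
      calc mu * a * β₁ ≤ mu * a * (Real.log (mu * a) / (2 * (mu * a))) :=
            mul_le_mul_of_nonneg_left (min_le_right _ _) hmua0.le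
        _ = Real.log (mu * a) / 2 := by field_simp
    have h4 : Real.exp (mu * a * β₁) < mu * a := by
      calc Real.exp (mu * a * β₁) ≤ Real.exp (Real.log (mu * a) / 2) :=
            Real.exp_le_exp.mpr h2
        _ < Real.exp (Real.log (mu * a)) := Real.exp_lt_exp.mpr (by linarith)
        _ = mu * a := Real.exp_log hmua0
    calc β₁ * Cfun a b β₁ ≤ Real.exp (mu * a * β₁) / (mu * a) := h1
      _ < 1 := (div_lt_one hmua0).mpr h4
  -- large endpoint
  set K := b (3 * a) with hKdef
  have hKpos : 0 < K := hb_pos _ (by positivity)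
  set ε : ℝ := 1 - (2⁻¹ : ℝ) ^ (K⁻¹) with hεdef
  have hpow_pos : (0:ℝ) < (2⁻¹ : ℝ) ^ (K⁻¹) := Real.rpow_pos_of_pos (by norm_num) _
  have hpow_lt1 : ((2⁻¹ : ℝ)) ^ (K⁻¹) < 1 :=
    Real.rpow_lt_one (by norm_num) (by norm_num) (by positivity)
  have hε0 : 0 < ε := by rw [hεdef]; linarith
  have hε1 : ε < 1 := by rw [hεdef]; linarith
  have hhalf : (1 - ε) ^ K = 1 / 2 := by
    rw [hεdef]
    have : (1:ℝ) - (1 - (2⁻¹ : ℝ) ^ (K⁻¹)) = (2⁻¹ : ℝ) ^ (K⁻¹) := by ring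
    rw [this, ← Real.rpow_mul (by norm_num : (0:ℝ) ≤ 2⁻¹),
      inv_mul_cancel₀ hKpos.ne', Real.rpow_one]
    norm_num
  set β₂ : ℝ := max (3 / ε) (β₁ + 1) with hβ₂def
  have hβ₂pos : 0 < β₂ := lt_of_lt_of_le (by linarith) (le_max_right _ _)
  have hβ₁₂ : β₁ < β₂ := lt_of_lt_of_le (by linarith) (le_max_right _ _)
  have hβ₂ε : 3 / β₂ ≤ ε := by
    rw [div_le_iff₀ hβ₂pos]
    have h1 : 3 / ε ≤ β₂ := le_max_left _ _
    rw [div_le_iff₀ hε0] at h1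
    linarith [mul_comm β₂ ε]
  have hbig : 1 < β₂ * Cfun a b β₂ := by
    have h1 := Cfun_ge_big hb_cont hb_mono hb0 ha hb_pos hε0 hε1 hβ₂pos hβ₂ε
    rw [← hKdef, hhalf] at h1
    linarith
  -- IVT
  have hgc : ContinuousOn (fun β => β * Cfun a b β) (Icc β₁ β₂) := by
    intro β hβ
    exact ((continuousAt_id.mul
      (Cfun_contAt hb_cont hb_mono hb0 ha hb_pos
        (lt_of_lt_of_le hβ₁ hβ.1)))).continuousWithinAt
  have hIVT := intermediate_value_Icc hβ₁₂.le hgc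
  have h1mem : (1:ℝ) ∈ Icc (β₁ * Cfun a b β₁) (β₂ * Cfun a b β₂) :=
    ⟨hsmall.le, hbig.le⟩
  obtain ⟨β, hβmem, hgβ⟩ := hIVT h1mem
  exact ⟨β, lt_of_lt_of_le hβ₁ hβmem.1, hgβ⟩
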